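/- Let Y ∈ ℍ^{M×N} admit a QSVD Y = U * D * Vᴴ with singular values σ : Fin (min M N) → ℝ. Then the squared Frobenius norm of Y equals the sum of the squared singular values: Σ_{i,j} ‖Y i j‖² = Σ_{i=1}^{min(M,N)} (σ i)². -/

import Mathlib

noncomputable section

open Matrix

abbrev ℍ : Type := Quaternion ℝ

/-- The `M × N` rectangular diagonal quaternion matrix of `σ : Fin K → ℝ`:
entry `(i, j)` is `σ i` when `i` and `j` have equal numerical index (below `K`), else `0`. -/
def rectDiag (M N : ℕ) {K : ℕ} (σ : Fin K → ℝ) : Matrix (Fin M) (Fin N) ℍ :=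
  Matrix.of fun i j =>
    if h : (i : ℕ) = (j : ℕ) ∧ (i : ℕ) < K then ((σ ⟨i, h.2⟩ : ℝ) : ℍ) else 0

/-- A square quaternion matrix is unitary if `A * Aᴴ = Aᴴ * A = 1`. -/
def IsUnitary {n : ℕ} (A : Matrix (Fin n) (Fin n) ℍ) : Prop :=
  A * Aᴴ = 1 ∧ Aᴴ * A = 1

/-- `IsQSVD A U σ V` : `A = U * D * Vᴴ` is a quaternion singular value decomposition of `A`,
with `U`, `V` unitary and `σ` a nonincreasing nonnegative family of singular values. -/
def IsQSVD {M N : ℕ} (A : Matrix (Fin M) (Fin N) ℍ)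
    (U : Matrix (Fin M) (Fin M) ℍ) (σ : Fin (min M N) → ℝ)
    (V : Matrix (Fin N) (Fin N) ℍ) : Prop :=
  IsUnitary U ∧ IsUnitary V ∧ Antitone σ ∧ (∀ i, 0 ≤ σ i) ∧
    A = U * rectDiag M N σ * Vᴴ

/-- `A` admits a QSVD with singular values `σ`. -/
def HasQSVD {M N : ℕ} (A : Matrix (Fin M) (Fin N) ℍ) (σ : Fin (min M N) → ℝ) : Prop :=
  ∃ U V, IsQSVD A U σ V

lemma re_sum {α : Type*} (s : Finset α) (f : α → ℍ) : (∑ x ∈ s, f x).re = ∑ x ∈ s, (f x).re :=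
  map_sum (QuaternionAlgebra.reₗ (c₁ := (-1 : ℝ)) (c₂ := (0 : ℝ)) (c₃ := (-1 : ℝ))) f s

lemma re_mul_comm (a b : ℍ) : (a * b).re = (b * a).re := by
  simp [Quaternion.re_mul]; ring

lemma norm_sq_eq (a : ℍ) : ‖a‖ ^ 2 = (a * star a).re := by
  rw [sq, ← Quaternion.normSq_eq_norm_mul_self, Quaternion.normSq_def]

lemma frob_eq {m n : ℕ} (A : Matrix (Fin m) (Fin n) ℍ) :
    ∑ i, ∑ j, ‖A i j‖ ^ 2 = ((A * Aᴴ).trace).re := by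
  simp only [Matrix.trace, Matrix.diag, Matrix.mul_apply, Matrix.conjTranspose_apply,
    re_sum, norm_sq_eq]

lemma retrace_comm {m n : ℕ} (A : Matrix (Fin m) (Fin n) ℍ) (B : Matrix (Fin n) (Fin m) ℍ) :
    ((A * B).trace).re = ((B * A).trace).re := by
  simp only [Matrix.trace, Matrix.diag, Matrix.mul_apply, re_sum]
  rw [Finset.sum_comm]
  exact Finset.sum_congr rfl fun j _ => Finset.sum_congr rfl fun i _ => re_mul_comm _ _


/-- The squared Frobenius norm of a quaternion matrix equals the sum of the squares of
its singular values. -/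
theorem qsvd_frobenius_eq_sum_sq {M N : ℕ} (Y : Matrix (Fin M) (Fin N) ℍ)
    (σ : Fin (min M N) → ℝ) (hY : HasQSVD Y σ) :
    ∑ i, ∑ j, ‖Y i j‖ ^ 2 = ∑ i, (σ i) ^ 2 := by
  obtain ⟨U, V, hU, hV, -, -, hA⟩ := hY
  set D := rectDiag M N σ with hD
  have h1 : ∑ i, ∑ j, ‖Y i j‖ ^ 2 = ∑ i, ∑ j, ‖D i j‖ ^ 2 := by
    rw [frob_eq, frob_eq, hA]
    have : U * D * Vᴴ * (U * D * Vᴴ)ᴴ = U * (D * Dᴴ * Uᴴ) := by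
      simp only [Matrix.conjTranspose_mul, Matrix.conjTranspose_conjTranspose]
      calc U * D * Vᴴ * (V * (Dᴴ * Uᴴ)) = U * D * (Vᴴ * V) * (Dᴴ * Uᴴ) := by
            simp only [Matrix.mul_assoc]
        _ = U * (D * Dᴴ * Uᴴ) := by rw [hV.2]; simp [Matrix.mul_assoc]
    rw [this, retrace_comm]
    have : D * Dᴴ * Uᴴ * U = D * Dᴴ := by rw [Matrix.mul_assoc, hU.2, Matrix.mul_one]
    rw [this]
  rw [h1]
  -- sum of squares of rectDiag entries
  have hKM : min M N ≤ M := min_le_left _ _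
  have hKN : min M N ≤ N := min_le_right _ _
  set e : Fin (min M N) → Fin M × Fin N :=
    fun k => (⟨k, lt_of_lt_of_le k.2 hKM⟩, ⟨k, lt_of_lt_of_le k.2 hKN⟩) with he
  have hinj : ∀ a ∈ Finset.univ, ∀ b ∈ Finset.univ, e a = e b → a = b := by
    intro a _ b _ h
    have := congrArg Prod.fst h
    simpa [he, Fin.ext_iff] using this
  have hLHS : ∑ i, ∑ j, ‖D i j‖ ^ 2 = ∑ p : Fin M × Fin N, ‖D p.1 p.2‖ ^ 2 := by
    rw [Fintype.sum_prod_type]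
  rw [hLHS]
  rw [← Finset.sum_subset (Finset.subset_univ (Finset.univ.image e))
    (fun p _ hp => ?_), Finset.sum_image hinj]
  · refine Finset.sum_congr rfl fun k _ => ?_
    simp only [hD, rectDiag, Matrix.of_apply, he]
    rw [dif_pos ⟨trivial, k.2⟩]
    simp [Quaternion.norm_coe, Real.norm_eq_abs, sq_abs]
  · -- p not in image → entry is zero
    simp only [hD, rectDiag, Matrix.of_apply]
    rw [dif_neg]
    · simp
    · rintro ⟨hij, hk⟩
      exact hp (Finset.mem_image.2 ⟨⟨p.1, hk⟩, Finset.mem_univ _, by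
        simp [he, Prod.ext_iff, Fin.ext_iff, hij]⟩)
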